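/- Substitution and the sequent-to-natural translation commute up to dB-reduction: for any vanilla value v, variable x, and vanilla term t, the natural term vᴺ{substituted for x in} tᴺ reduces by zero or more dB steps to ({v/x}t)ᴺ. -/

import Mathlib

/-- Vanilla λ-terms: var, abstraction, cut [s/x]t, subtraction [y s/x]t. -/
inductive VTerm : Type
  | var : ℕ → VTerm
  | lam : ℕ → VTerm → VTerm
  | cut : VTerm → ℕ → VTerm → VTerm
  | sub : ℕ → VTerm → ℕ → VTerm → VTerm
  deriving DecidableEq

namespace VTerm

/-- Values: variables and abstractions. -/
inductive IsValue : VTerm → Prop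
  | var (x : ℕ) : IsValue (var x)
  | lam (x : ℕ) (t : VTerm) : IsValue (lam x t)

/-- Free variables of a vanilla term. -/
def fv : VTerm → Finset ℕ
  | var x => {x}
  | lam x t => fv t \ {x}
  | cut s x t => fv s ∪ (fv t \ {x})
  | sub y s x t => insert y (fv s ∪ (fv t \ {x}))

/-- Meta-level substitution of a value `v` for `x` in a vanilla term. -/
def vsub (v : VTerm) (x : ℕ) : VTerm → VTerm
  | var y => if y = x then v else var y
  | lam y t => lam y (vsub v x t)
  | cut s y t => cut (vsub v x s) y (vsub v x t)
  | sub z s y t =>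
      if z = x then
        match v with
        | var w => sub w (vsub v x s) y (vsub v x t)
        | lam w u => cut (cut (vsub v x s) w u) y (vsub v x t)
        | cut _ _ _ => sub z (vsub v x s) y (vsub v x t)
        | sub _ _ _ _ => sub z (vsub v x s) y (vsub v x t)
      else sub z (vsub v x s) y (vsub v x t)

/-- Cut-free vanilla terms. -/
def CutFree : VTerm → Prop
  | var _ => True
  | lam _ t => CutFree t
  | cut _ _ _ => False
  | sub _ s _ t => CutFree s ∧ CutFree t

end VTerm

/-- Left contexts: L ::= ⟨·⟩ | [t/x]L | [y t/x]L. -/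
inductive LCtx : Type
  | hole : LCtx
  | cut : VTerm → ℕ → LCtx → LCtx
  | sub : ℕ → VTerm → ℕ → LCtx → LCtx
  deriving DecidableEq

namespace LCtx

def plug : LCtx → VTerm → VTerm
  | hole, t => t
  | cut s x L, t => VTerm.cut s x (L.plug t)
  | sub y s x L, t => VTerm.sub y s x (L.plug t)

/-- Variables captured by a left context. -/
def dom : LCtx → Finset ℕ
  | hole => ∅
  | cut _ x L => insert x L.dom
  | sub _ _ x L => insert x L.dom

end LCtx

/-- General contexts for vanilla terms. -/
inductive GCtx : Type
  | hole : GCtx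
  | lam : ℕ → GCtx → GCtx
  | cutL : GCtx → ℕ → VTerm → GCtx
  | cutR : VTerm → ℕ → GCtx → GCtx
  | subL : ℕ → GCtx → ℕ → VTerm → GCtx
  | subR : ℕ → VTerm → ℕ → GCtx → GCtx

namespace GCtx

def plug : GCtx → VTerm → VTerm
  | hole, t => t
  | lam x C, t => VTerm.lam x (C.plug t)
  | cutL C x s, t => VTerm.cut (C.plug t) x s
  | cutR s x C, t => VTerm.cut s x (C.plug t)
  | subL y C x s, t => VTerm.sub y (C.plug t) x s
  | subR y s x C, t => VTerm.sub y s x (C.plug t)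

end GCtx

/-- Root cut-elimination rule: [L⟨v⟩/x]t → L⟨{v/x}t⟩. -/
inductive CutRoot : VTerm → VTerm → Prop
  | mk (L : LCtx) (v : VTerm) (x : ℕ) (t : VTerm) (hv : v.IsValue) :
      CutRoot (VTerm.cut (L.plug v) x t) (L.plug (VTerm.vsub v x t))

/-- Cut elimination: closure of the root rule under general contexts. -/
inductive CutStep : VTerm → VTerm → Prop
  | mk (C : GCtx) {t s : VTerm} : CutRoot t s → CutStep (C.plug t) (C.plug s)

/-- Renaming root step: the value is a variable. -/
inductive RenRoot : VTerm → VTerm → Prop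
  | mk (L : LCtx) (y x : ℕ) (t : VTerm) :
      RenRoot (VTerm.cut (L.plug (VTerm.var y)) x t) (L.plug (VTerm.vsub (VTerm.var y) x t))

/-- Renaming cut-elimination steps. -/
inductive RenStep : VTerm → VTerm → Prop
  | mk (C : GCtx) {t s : VTerm} : RenRoot t s → RenStep (C.plug t) (C.plug s)

/-- Strong normalization for cut elimination. -/
def SN (t : VTerm) : Prop := Acc (fun a b => CutStep b a) t

/-- Splitting of a vanilla term as a left context around a value. -/
def split : VTerm → LCtx × VTerm
  | VTerm.cut s x t => let p := split t; (LCtx.cut s x p.1, p.2)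
  | VTerm.sub y s x t => let p := split t; (LCtx.sub y s x p.1, p.2)
  | t => (LCtx.hole, t)

/-- General substitution {s/x}t := L⟨{v/x}t⟩ for s = L⟨v⟩. -/
def gsub (s : VTerm) (x : ℕ) (t : VTerm) : VTerm :=
  (split s).1.plug (VTerm.vsub (split s).2 x t)

/-- Formulas of minimal intuitionistic logic. -/
inductive Ty : Type
  | base : Ty
  | arr : Ty → Ty → Ty
  deriving DecidableEq

/-- Typing judgement of the vanilla sequent calculus (additive). -/
inductive Jud : (ℕ → Option Ty) → VTerm → Ty → Prop
  | ax (Γ : ℕ → Option Ty) (x : ℕ) (A : Ty) :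
      Γ x = some A → Jud Γ (VTerm.var x) A
  | cut (Γ : ℕ → Option Ty) (s : VTerm) (x : ℕ) (t : VTerm) (A B : Ty) :
      Γ x = none → Jud Γ s A →
      Jud (Function.update Γ x (some A)) t B → Jud Γ (VTerm.cut s x t) B
  | lamr (Γ : ℕ → Option Ty) (x : ℕ) (t : VTerm) (A B : Ty) :
      Γ x = none → Jud (Function.update Γ x (some A)) t B →
      Jud Γ (VTerm.lam x t) (Ty.arr A B)
  | subl (Γ : ℕ → Option Ty) (y : ℕ) (s : VTerm) (x : ℕ) (t : VTerm) (A B C : Ty) :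
      Γ x = none → (Γ y = none ∨ Γ y = some (Ty.arr A B)) →
      Jud Γ s A → Jud (Function.update Γ x (some B)) t C →
      Jud (Function.update Γ y (some (Ty.arr A B))) (VTerm.sub y s x t) C

/-- Natural λ-terms with explicit substitutions. -/
inductive NTerm : Type
  | var : ℕ → NTerm
  | lam : ℕ → NTerm → NTerm
  | app : NTerm → NTerm → NTerm
  | es : NTerm → ℕ → NTerm → NTerm
  deriving DecidableEq

namespace NTerm

inductive IsValue : NTerm → Prop
  | var (x : ℕ) : IsValue (var x)
  | lam (x : ℕ) (t : NTerm) : IsValue (lam x t)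

def fv : NTerm → Finset ℕ
  | var x => {x}
  | lam x t => fv t \ {x}
  | app t s => fv t ∪ fv s
  | es s x t => fv s ∪ (fv t \ {x})

/-- Meta-level substitution in natural terms. -/
def nsub (v : NTerm) (x : ℕ) : NTerm → NTerm
  | var y => if y = x then v else var y
  | lam y t => lam y (nsub v x t)
  | app t s => app (nsub v x t) (nsub v x s)
  | es s y t => es (nsub v x s) y (nsub v x t)

/-- Size: number of constructors. -/
def size : NTerm → ℕ
  | var _ => 1
  | lam _ t => size t + 1
  | app t s => size t + size s + 1
  | es s _ t => size s + size t + 1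

end NTerm

/-- List-of-substitutions contexts in the natural calculus. -/
inductive NLCtx : Type
  | hole : NLCtx
  | es : NTerm → ℕ → NLCtx → NLCtx

def NLCtx.plug : NLCtx → NTerm → NTerm
  | NLCtx.hole, t => t
  | NLCtx.es s x L, t => NTerm.es s x (L.plug t)

/-- General contexts for natural terms. -/
inductive NGCtx : Type
  | hole : NGCtx
  | lam : ℕ → NGCtx → NGCtx
  | appL : NGCtx → NTerm → NGCtx
  | appR : NTerm → NGCtx → NGCtx
  | esL : NGCtx → ℕ → NTerm → NGCtx
  | esR : NTerm → ℕ → NGCtx → NGCtx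

def NGCtx.plug : NGCtx → NTerm → NTerm
  | NGCtx.hole, t => t
  | NGCtx.lam x C, t => NTerm.lam x (C.plug t)
  | NGCtx.appL C s, t => NTerm.app (C.plug t) s
  | NGCtx.appR s C, t => NTerm.app s (C.plug t)
  | NGCtx.esL C x s, t => NTerm.es (C.plug t) x s
  | NGCtx.esR s x C, t => NTerm.es s x (C.plug t)

/-- Root dB rule: L⟨λx.t⟩ s → L⟨[s/x]t⟩. -/
inductive DBRoot : NTerm → NTerm → Prop
  | mk (L : NLCtx) (x : ℕ) (t s : NTerm) :
      DBRoot (NTerm.app (L.plug (NTerm.lam x t)) s) (L.plug (NTerm.es s x t))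

/-- Root vs rule: [L⟨v⟩/x]t → L⟨t{v/x}⟩. -/
inductive VsRoot : NTerm → NTerm → Prop
  | mk (L : NLCtx) (v : NTerm) (x : ℕ) (t : NTerm) (hv : v.IsValue) :
      VsRoot (NTerm.es (L.plug v) x t) (L.plug (NTerm.nsub v x t))

inductive DB : NTerm → NTerm → Prop
  | mk (C : NGCtx) {t s : NTerm} : DBRoot t s → DB (C.plug t) (C.plug s)

inductive Vs : NTerm → NTerm → Prop
  | mk (C : NGCtx) {t s : NTerm} : VsRoot t s → Vs (C.plug t) (C.plug s)

/-- VSC reduction: dB ∪ vs. -/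
def VSC (t s : NTerm) : Prop := DB t s ∨ Vs t s

/-- Translation from vanilla terms to natural terms. -/
def VTerm.toN : VTerm → NTerm
  | VTerm.var x => NTerm.var x
  | VTerm.lam x t => NTerm.lam x t.toN
  | VTerm.cut s x t => NTerm.es s.toN x t.toN
  | VTerm.sub y s x t => NTerm.es (NTerm.app (NTerm.var y) s.toN) x t.toN

/-- Translation of left contexts. -/
def LCtx.toN : LCtx → NLCtx
  | LCtx.hole => NLCtx.hole
  | LCtx.cut s x L => NLCtx.es s.toN x L.toN
  | LCtx.sub y s x L => NLCtx.es (NTerm.app (NTerm.var y) s.toN) x L.toN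

/-- Translation from natural terms to vanilla terms (with fresh choices). -/
def NTerm.toS : NTerm → VTerm
  | NTerm.var x => VTerm.var x
  | NTerm.lam x t => VTerm.lam x t.toS
  | NTerm.es s x t => VTerm.cut s.toS x t.toS
  | NTerm.app t s =>
      let a := t.toS
      let b := s.toS
      let x := (a.fv ∪ b.fv).sup id + 1
      VTerm.cut a x (VTerm.sub x b (x + 1) (VTerm.var (x + 1)))

/-- Weak contexts. -/
inductive WCtx : Type
  | hole : WCtx
  | cutR : VTerm → ℕ → WCtx → WCtx
  | cutL : WCtx → ℕ → VTerm → WCtx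
  | subR : ℕ → VTerm → ℕ → WCtx → WCtx
  | subL : ℕ → WCtx → ℕ → VTerm → WCtx

namespace WCtx

def plug : WCtx → VTerm → VTerm
  | hole, t => t
  | cutR s x W, t => VTerm.cut s x (W.plug t)
  | cutL W x s, t => VTerm.cut (W.plug t) x s
  | subR y s x W, t => VTerm.sub y s x (W.plug t)
  | subL y W x s, t => VTerm.sub y (W.plug t) x s

/-- Free variables of a weak context (ignoring the hole). -/
def fv : WCtx → Finset ℕ
  | hole => ∅
  | cutR s x W => s.fv ∪ (W.fv \ {x})
  | cutL W x s => W.fv ∪ (s.fv \ {x})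
  | subR y s x W => insert y (s.fv ∪ (W.fv \ {x}))
  | subL y W x s => insert y (W.fv ∪ (s.fv \ {x}))

/-- Variables captured by a weak context along the hole path. -/
def dom : WCtx → Finset ℕ
  | hole => ∅
  | cutR _ x W => insert x W.dom
  | cutL W _ _ => W.dom
  | subR _ _ x W => insert x W.dom
  | subL _ W _ _ => W.dom

end WCtx

/-- Structural equivalence: congruence closure of moving left rules past weak contexts. -/
inductive SEq : VTerm → VTerm → Prop
  | root1 (s : VTerm) (x : ℕ) (W : WCtx) (t : VTerm)
      (h1 : x ∉ W.fv) (h2 : Disjoint s.fv W.dom) :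
      SEq (VTerm.cut s x (W.plug t)) (W.plug (VTerm.cut s x t))
  | root2 (y : ℕ) (s : VTerm) (x : ℕ) (W : WCtx) (t : VTerm)
      (h1 : x ∉ W.fv) (h2 : Disjoint (insert y s.fv) W.dom) :
      SEq (VTerm.sub y s x (W.plug t)) (W.plug (VTerm.sub y s x t))
  | refl (t : VTerm) : SEq t t
  | symm {t s : VTerm} : SEq t s → SEq s t
  | trans {t s u : VTerm} : SEq t s → SEq s u → SEq t u
  | ctx (C : GCtx) {t s : VTerm} : SEq t s → SEq (C.plug t) (C.plug s)

/-- Iterated relation: exactly `n` steps. -/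
def RelPow {α : Type _} (r : α → α → Prop) : ℕ → α → α → Prop
  | 0, a, b => a = b
  | n + 1, a, c => ∃ b, r a b ∧ RelPow r n b c

/-- Elimination contexts E = L⟨[⟨·⟩/x]t⟩. -/
structure ECtx where
  L : LCtx
  x : ℕ
  t : VTerm

/-- Plugging a term in an elimination context. -/
def ECtx.plug (E : ECtx) (u : VTerm) : VTerm := E.L.plug (VTerm.cut u E.x E.t)

/-- Dual of a set of terms: elimination contexts producing SN terms. -/
def dualT (S : Set VTerm) : Set ECtx := {E | ∀ t ∈ S, SN (E.plug t)}

/-- Dual of a set of elimination contexts. -/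
def dualE (T : Set ECtx) : Set VTerm := {t | ∀ E ∈ T, SN (E.plug t)}

def NGCtx.comp : NGCtx → NGCtx → NGCtx
  | NGCtx.hole, D => D
  | NGCtx.lam x C, D => NGCtx.lam x (C.comp D)
  | NGCtx.appL C s, D => NGCtx.appL (C.comp D) s
  | NGCtx.appR s C, D => NGCtx.appR s (C.comp D)
  | NGCtx.esL C x s, D => NGCtx.esL (C.comp D) x s
  | NGCtx.esR s x C, D => NGCtx.esR s x (C.comp D)

lemma NGCtx.plug_comp (C D : NGCtx) (t : NTerm) :
    (C.comp D).plug t = C.plug (D.plug t) := by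
  induction C <;> simp [NGCtx.comp, NGCtx.plug, *]

lemma DB.inCtx (C : NGCtx) {a b : NTerm} (h : DB a b) : DB (C.plug a) (C.plug b) := by
  rcases h with ⟨D, h⟩
  have := DB.mk (C.comp D) h
  rwa [NGCtx.plug_comp, NGCtx.plug_comp] at this

lemma rtgDB_ctx (C : NGCtx) {a b : NTerm}
    (h : Relation.ReflTransGen DB a b) :
    Relation.ReflTransGen DB (C.plug a) (C.plug b) := by
  induction h with
  | refl => exact Relation.ReflTransGen.refl
  | tail _ hstep ih => exact ih.tail (hstep.inCtx C)

local infix:50 " ⤳* " => Relation.ReflTransGen DB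

/-- substitution and the sequent-to-natural translation commute up to dB. -/
theorem toN_vsub_commute_up_to_dB (v : VTerm) (x : ℕ) (t : VTerm) (hv : v.IsValue) :
    Relation.ReflTransGen DB (NTerm.nsub v.toN x t.toN) (VTerm.vsub v x t).toN := by
  induction t with
  | var y =>
    by_cases h : y = x <;> simp [VTerm.toN, NTerm.nsub, VTerm.vsub, h] <;>
      exact Relation.ReflTransGen.refl
  | lam y t ih =>
    simpa [VTerm.toN, NTerm.nsub, VTerm.vsub, NGCtx.plug]
      using rtgDB_ctx (NGCtx.lam y NGCtx.hole) ih
  | cut s y t ihs iht =>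
    simp only [VTerm.toN, NTerm.nsub, VTerm.vsub]
    calc NTerm.es (NTerm.nsub v.toN x s.toN) y (NTerm.nsub v.toN x t.toN)
        ⤳* NTerm.es (VTerm.vsub v x s).toN y (NTerm.nsub v.toN x t.toN) := by
          simpa [NGCtx.plug] using
            rtgDB_ctx (NGCtx.esL NGCtx.hole y (NTerm.nsub v.toN x t.toN)) ihs
      _ ⤳* NTerm.es (VTerm.vsub v x s).toN y (VTerm.vsub v x t).toN := by
          simpa [NGCtx.plug] using
            rtgDB_ctx (NGCtx.esR (VTerm.vsub v x s).toN y NGCtx.hole) iht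
  | sub z s y t ihs iht =>
    by_cases h : z = x
    · subst h
      cases hv with
      | var w =>
        simp only [VTerm.toN, NTerm.nsub, VTerm.vsub, if_pos rfl]
        calc NTerm.es (NTerm.app (NTerm.var w) (NTerm.nsub (NTerm.var w) z s.toN)) y
              (NTerm.nsub (NTerm.var w) z t.toN)
            ⤳* NTerm.es (NTerm.app (NTerm.var w) (VTerm.vsub (VTerm.var w) z s).toN) y
              (NTerm.nsub (NTerm.var w) z t.toN) := by
              simpa [NGCtx.plug, VTerm.toN] using
                rtgDB_ctx (NGCtx.esL (NGCtx.appR (NTerm.var w) NGCtx.hole) y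
                  (NTerm.nsub (NTerm.var w) z t.toN)) ihs
          _ ⤳* NTerm.es (NTerm.app (NTerm.var w) (VTerm.vsub (VTerm.var w) z s).toN) y
              (VTerm.vsub (VTerm.var w) z t).toN := by
              simpa [NGCtx.plug, VTerm.toN] using
                rtgDB_ctx (NGCtx.esR (NTerm.app (NTerm.var w)
                  (VTerm.vsub (VTerm.var w) z s).toN) y NGCtx.hole) iht
      | lam w u =>
        simp only [VTerm.toN, NTerm.nsub, VTerm.vsub, if_pos rfl]
        set V := VTerm.lam w u
        calc NTerm.es (NTerm.app (NTerm.lam w u.toN) (NTerm.nsub V.toN z s.toN)) y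
              (NTerm.nsub V.toN z t.toN)
            ⤳* NTerm.es (NTerm.app (NTerm.lam w u.toN) (VTerm.vsub V z s).toN) y
              (NTerm.nsub V.toN z t.toN) := by
              simpa [NGCtx.plug, VTerm.toN, V] using
                rtgDB_ctx (NGCtx.esL (NGCtx.appR (NTerm.lam w u.toN) NGCtx.hole) y
                  (NTerm.nsub V.toN z t.toN)) ihs
          _ ⤳* NTerm.es (NTerm.app (NTerm.lam w u.toN) (VTerm.vsub V z s).toN) y
              (VTerm.vsub V z t).toN := by
              simpa [NGCtx.plug, VTerm.toN, V] using
                rtgDB_ctx (NGCtx.esR (NTerm.app (NTerm.lam w u.toN)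
                  (VTerm.vsub V z s).toN) y NGCtx.hole) iht
          _ ⤳* NTerm.es (NTerm.es (VTerm.vsub V z s).toN w u.toN) y
              (VTerm.vsub V z t).toN := by
              refine Relation.ReflTransGen.single ?_
              have hr : DBRoot (NTerm.app (NLCtx.hole.plug (NTerm.lam w u.toN))
                  (VTerm.vsub V z s).toN)
                  (NLCtx.hole.plug (NTerm.es (VTerm.vsub V z s).toN w u.toN)) :=
                DBRoot.mk NLCtx.hole w u.toN (VTerm.vsub V z s).toN
              simpa [NGCtx.plug, NLCtx.plug] using
                DB.mk (NGCtx.esL NGCtx.hole y (VTerm.vsub V z t).toN) hr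
    · simp only [VTerm.toN, NTerm.nsub, VTerm.vsub, if_neg h]
      have hvar : NTerm.nsub v.toN x (NTerm.var z) = NTerm.var z := by
        simp [NTerm.nsub, h]
      calc NTerm.es (NTerm.app (NTerm.var z) (NTerm.nsub v.toN x s.toN)) y
            (NTerm.nsub v.toN x t.toN)
          ⤳* NTerm.es (NTerm.app (NTerm.var z) (VTerm.vsub v x s).toN) y
            (NTerm.nsub v.toN x t.toN) := by
            simpa [NGCtx.plug] using
              rtgDB_ctx (NGCtx.esL (NGCtx.appR (NTerm.var z) NGCtx.hole) y
                (NTerm.nsub v.toN x t.toN)) ihs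
        _ ⤳* NTerm.es (NTerm.app (NTerm.var z) (VTerm.vsub v x s).toN) y
            (VTerm.vsub v x t).toN := by
            simpa [NGCtx.plug] using
              rtgDB_ctx (NGCtx.esR (NTerm.app (NTerm.var z)
                (VTerm.vsub v x s).toN) y NGCtx.hole) iht
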